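/- Let H be a finite dimensional quasitriangular Hopf algebra with quasitriangular structure r = r¹ ⊗ r² ∈ H⊗H. The map φ : H* ⊗ H → D(H) defined by φ(p ⊗ h) = (p ↼ S⁻¹(r¹)) ⊗ r² h is bijective, satisfies φ(ε ⊗ h) = ε ⊗ h for all h ∈ H (so φ is a morphism of right H-modules, where H acts by right multiplication on the second tensor factor), and is a morphism of left H^{*cop}-comodules. -/

import Mathlib

open TensorProduct LinearMap Coalgebra

noncomputable section

namespace Paper

universe u

variable (k : Type u) [Field k]

section AlgebraSide

variable (A : Type u) [Ring A] [Algebra k A]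
variable (V : Type u) [AddCommGroup V] [Module k V]

/-- `a ⊗ (b ⊗ v) ↦ ab ⊗ v`. -/
def muls2 : A ⊗[k] (A ⊗[k] V) →ₗ[k] A ⊗[k] V :=
  rTensor V (mul' k A) ∘ₗ (TensorProduct.assoc k A A V).symm.toLinearMap

/-- `a ⊗ (b ⊗ (c ⊗ v)) ↦ abc ⊗ v`. -/
def muls3 : A ⊗[k] (A ⊗[k] (A ⊗[k] V)) →ₗ[k] A ⊗[k] V :=
  muls2 k A V ∘ₗ lTensor A (muls2 k A V)

variable {A V}

/-- The multiplication of the Brzezinski crossed product `A ⊗_{R,σ} V`. -/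
def brzMul (R : V ⊗[k] A →ₗ[k] A ⊗[k] V) (σ : V ⊗[k] V →ₗ[k] A ⊗[k] V) :
    (A ⊗[k] V) ⊗[k] (A ⊗[k] V) →ₗ[k] A ⊗[k] V :=
  muls2 k A V ∘ₗ
    lTensor A (muls2 k A V ∘ₗ lTensor A σ ∘ₗ (TensorProduct.assoc k A V V).toLinearMap
      ∘ₗ rTensor V R ∘ₗ (TensorProduct.assoc k V A V).symm.toLinearMap) ∘ₗ
    (TensorProduct.assoc k A V (A ⊗[k] V)).toLinearMap

/-- The axioms (1.1)--(1.5) of a Brzezinski crossed product. -/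
structure IsBrzezinski (e : V) (R : V ⊗[k] A →ₗ[k] A ⊗[k] V)
    (σ : V ⊗[k] V →ₗ[k] A ⊗[k] V) : Prop where
  unit_R_left : ∀ a : A, R (e ⊗ₜ a) = a ⊗ₜ e
  unit_R_right : ∀ v : V, R (v ⊗ₜ (1 : A)) = (1 : A) ⊗ₜ v
  unit_σ_left : ∀ v : V, σ (e ⊗ₜ v) = (1 : A) ⊗ₜ v
  unit_σ_right : ∀ v : V, σ (v ⊗ₜ e) = (1 : A) ⊗ₜ v
  brz3 : R ∘ₗ lTensor V (mul' k A)
      = rTensor V (mul' k A) ∘ₗ (TensorProduct.assoc k A A V).symm.toLinearMap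
        ∘ₗ lTensor A R ∘ₗ (TensorProduct.assoc k A V A).toLinearMap
        ∘ₗ rTensor A R ∘ₗ (TensorProduct.assoc k V A A).symm.toLinearMap
  brz4 : muls2 k A V ∘ₗ lTensor A σ ∘ₗ (TensorProduct.assoc k A V V).toLinearMap
        ∘ₗ rTensor V R ∘ₗ (TensorProduct.assoc k V A V).symm.toLinearMap ∘ₗ lTensor V σ
      = muls2 k A V ∘ₗ lTensor A σ ∘ₗ (TensorProduct.assoc k A V V).toLinearMap
        ∘ₗ rTensor V σ ∘ₗ (TensorProduct.assoc k V V V).symm.toLinearMap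
  brz5 : muls2 k A V ∘ₗ lTensor A σ ∘ₗ (TensorProduct.assoc k A V V).toLinearMap
        ∘ₗ rTensor V R ∘ₗ (TensorProduct.assoc k V A V).symm.toLinearMap ∘ₗ lTensor V R
      = muls2 k A V ∘ₗ lTensor A R ∘ₗ (TensorProduct.assoc k A V A).toLinearMap
        ∘ₗ rTensor A σ ∘ₗ (TensorProduct.assoc k V V A).symm.toLinearMap

/-- The twisted tensor product multiplication on `A ⊗ B`, for a "multiplication"
`m` on the vector space `B`. -/
def ttMul {B : Type u} [AddCommGroup B] [Module k B]
    (R : B ⊗[k] A →ₗ[k] A ⊗[k] B) (m : B ⊗[k] B →ₗ[k] B) :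
    (A ⊗[k] B) ⊗[k] (A ⊗[k] B) →ₗ[k] A ⊗[k] B :=
  muls2 k A B ∘ₗ
    lTensor A (lTensor A m ∘ₗ (TensorProduct.assoc k A B B).toLinearMap
      ∘ₗ rTensor B R ∘ₗ (TensorProduct.assoc k B A B).symm.toLinearMap) ∘ₗ
    (TensorProduct.assoc k A B (A ⊗[k] B)).toLinearMap

/-- The axioms of a twisting map `R : B ⊗ A → A ⊗ B`, where the algebra structure on
the vector space `B` is given by the multiplication `m` with unit `e`. -/
structure IsTwisting {B : Type u} [AddCommGroup B] [Module k B]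
    (R : B ⊗[k] A →ₗ[k] A ⊗[k] B) (m : B ⊗[k] B →ₗ[k] B) (e : B) : Prop where
  unit_left : ∀ a : A, R (e ⊗ₜ a) = a ⊗ₜ e
  unit_right : ∀ b : B, R (b ⊗ₜ (1 : A)) = (1 : A) ⊗ₜ b
  mul_A : R ∘ₗ lTensor B (mul' k A)
      = rTensor B (mul' k A) ∘ₗ (TensorProduct.assoc k A A B).symm.toLinearMap
        ∘ₗ lTensor A R ∘ₗ (TensorProduct.assoc k A B A).toLinearMap
        ∘ₗ rTensor A R ∘ₗ (TensorProduct.assoc k B A A).symm.toLinearMap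
  mul_B : R ∘ₗ rTensor A m
      = lTensor A m ∘ₗ (TensorProduct.assoc k A B B).toLinearMap
        ∘ₗ rTensor B R ∘ₗ (TensorProduct.assoc k B A B).symm.toLinearMap
        ∘ₗ lTensor B R ∘ₗ (TensorProduct.assoc k B B A).toLinearMap

/-- The deformed map `R'` of the invariance under twisting theorem (formula (Rprim)). -/
def Rtw (R : V ⊗[k] A →ₗ[k] A ⊗[k] V) (θ γ : V →ₗ[k] A ⊗[k] V) :
    V ⊗[k] A →ₗ[k] A ⊗[k] V :=
  muls3 k A V ∘ₗ lTensor A (lTensor A γ) ∘ₗ lTensor A R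
    ∘ₗ (TensorProduct.assoc k A V A).toLinearMap ∘ₗ rTensor A θ

/-- The deformed map `σ'` of the invariance under twisting theorem (formula (sigmaprim)). -/
def σtw (R : V ⊗[k] A →ₗ[k] A ⊗[k] V) (σ : V ⊗[k] V →ₗ[k] A ⊗[k] V)
    (θ γ : V →ₗ[k] A ⊗[k] V) : V ⊗[k] V →ₗ[k] A ⊗[k] V :=
  muls2 k A V ∘ₗ lTensor A γ ∘ₗ muls3 k A V ∘ₗ lTensor A (lTensor A σ)
    ∘ₗ lTensor A ((TensorProduct.assoc k A V V).toLinearMap ∘ₗ rTensor V R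
        ∘ₗ (TensorProduct.assoc k V A V).symm.toLinearMap)
    ∘ₗ (TensorProduct.assoc k A V (A ⊗[k] V)).toLinearMap ∘ₗ TensorProduct.map θ θ

/-- Condition (cros4), relative to a map `σ'`. -/
def Cros4 (R : V ⊗[k] A →ₗ[k] A ⊗[k] V) (σ : V ⊗[k] V →ₗ[k] A ⊗[k] V)
    (γ : V →ₗ[k] A ⊗[k] V) (σ' : V ⊗[k] V →ₗ[k] A ⊗[k] V) : Prop :=
  muls2 k A V ∘ₗ TensorProduct.map (mul' k A) σ'
      ∘ₗ (TensorProduct.assoc k (A ⊗[k] A) V V).toLinearMap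
      ∘ₗ rTensor V (TensorProduct.assoc k A A V).symm.toLinearMap
      ∘ₗ rTensor V (lTensor A γ) ∘ₗ rTensor V R
      ∘ₗ (TensorProduct.assoc k V A V).symm.toLinearMap ∘ₗ lTensor V γ
    = muls2 k A V ∘ₗ lTensor A γ ∘ₗ σ

/-- Conditions (cros1)--(cros3) on the pair `(θ, γ)`. -/
def Cros123 (e : V) (θ γ : V →ₗ[k] A ⊗[k] V) : Prop :=
  θ e = (1 : A) ⊗ₜ e ∧ γ e = (1 : A) ⊗ₜ e ∧
  muls2 k A V ∘ₗ lTensor A γ ∘ₗ θ = TensorProduct.mk k A V 1 ∧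
  muls2 k A V ∘ₗ lTensor A θ ∘ₗ γ = TensorProduct.mk k A V 1

/-- The map `φ(a ⊗ v) = a v_{<-1>} ⊗ v_{<0>}`. -/
def φtw (θ : V →ₗ[k] A ⊗[k] V) : A ⊗[k] V →ₗ[k] A ⊗[k] V :=
  muls2 k A V ∘ₗ lTensor A θ

end AlgebraSide

section CoalgebraSide

variable (C : Type u) [AddCommGroup C] [Module k C] [Coalgebra k C]
variable (X : Type u) [AddCommGroup X] [Module k X]

variable {C X}

/-- The comultiplication of the crossed coproduct `X_{W,ρ} ⊗ C`. -/
def coDelta (W : X ⊗[k] C →ₗ[k] C ⊗[k] X) (ρ : X ⊗[k] C →ₗ[k] X ⊗[k] X) :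
    X ⊗[k] C →ₗ[k] (X ⊗[k] C) ⊗[k] (X ⊗[k] C) :=
  (TensorProduct.assoc k X C (X ⊗[k] C)).symm.toLinearMap ∘ₗ
  lTensor X (TensorProduct.assoc k C X C).toLinearMap ∘ₗ
  lTensor X (rTensor C W) ∘ₗ
  lTensor X (TensorProduct.assoc k X C C).symm.toLinearMap ∘ₗ
  (TensorProduct.assoc k X X (C ⊗[k] C)).toLinearMap ∘ₗ
  TensorProduct.map ρ comul ∘ₗ
  (TensorProduct.assoc k X C C).symm.toLinearMap ∘ₗ
  lTensor X comul

/-- The counit `ε_X ⊗ ε_C` of the crossed coproduct. -/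
def coEps (εX : X →ₗ[k] k) : X ⊗[k] C →ₗ[k] k :=
  (TensorProduct.lid k k).toLinearMap ∘ₗ TensorProduct.map εX counit

/-- The axioms (cobrz1)--(cobrz5) of a crossed coproduct. -/
structure IsCoBrzezinski (εX : X →ₗ[k] k) (W : X ⊗[k] C →ₗ[k] C ⊗[k] X)
    (ρ : X ⊗[k] C →ₗ[k] X ⊗[k] X) : Prop where
  counit_W_left : (TensorProduct.rid k C).toLinearMap ∘ₗ lTensor C εX ∘ₗ W
      = (TensorProduct.lid k C).toLinearMap ∘ₗ rTensor C εX
  counit_W_right : (TensorProduct.lid k X).toLinearMap ∘ₗ rTensor X counit ∘ₗ W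
      = (TensorProduct.rid k X).toLinearMap ∘ₗ lTensor X counit
  counit_ρ_left : (TensorProduct.rid k X).toLinearMap ∘ₗ lTensor X εX ∘ₗ ρ
      = (TensorProduct.rid k X).toLinearMap ∘ₗ lTensor X counit
  counit_ρ_right : (TensorProduct.lid k X).toLinearMap ∘ₗ rTensor X εX ∘ₗ ρ
      = (TensorProduct.rid k X).toLinearMap ∘ₗ lTensor X counit
  cobrz3 : rTensor X comul ∘ₗ W
      = (TensorProduct.assoc k C C X).symm.toLinearMap ∘ₗ lTensor C W
        ∘ₗ (TensorProduct.assoc k C X C).toLinearMap ∘ₗ rTensor C W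
        ∘ₗ (TensorProduct.assoc k X C C).symm.toLinearMap ∘ₗ lTensor X comul
  cobrz4 : rTensor X ρ ∘ₗ (TensorProduct.assoc k X C X).symm.toLinearMap
        ∘ₗ lTensor X W ∘ₗ (TensorProduct.assoc k X X C).toLinearMap ∘ₗ rTensor C ρ
        ∘ₗ (TensorProduct.assoc k X C C).symm.toLinearMap ∘ₗ lTensor X comul
      = (TensorProduct.assoc k X X X).symm.toLinearMap ∘ₗ lTensor X ρ
        ∘ₗ (TensorProduct.assoc k X X C).toLinearMap ∘ₗ rTensor C ρ
        ∘ₗ (TensorProduct.assoc k X C C).symm.toLinearMap ∘ₗ lTensor X comul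
  cobrz5 : rTensor X W ∘ₗ (TensorProduct.assoc k X C X).symm.toLinearMap
        ∘ₗ lTensor X W ∘ₗ (TensorProduct.assoc k X X C).toLinearMap ∘ₗ rTensor C ρ
        ∘ₗ (TensorProduct.assoc k X C C).symm.toLinearMap ∘ₗ lTensor X comul
      = (TensorProduct.assoc k C X X).symm.toLinearMap ∘ₗ lTensor C ρ
        ∘ₗ (TensorProduct.assoc k C X C).toLinearMap ∘ₗ rTensor C W
        ∘ₗ (TensorProduct.assoc k X C C).symm.toLinearMap ∘ₗ lTensor X comul

end CoalgebraSide

section BialgebraSide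

variable (A : Type u) [Ring A] [Bialgebra k A]
variable (C : Type u) [AddCommGroup C] [Module k C] [Coalgebra k C]

/-- `W₀ : A ⊗ C → C ⊗ A`, the flip. -/
def W0 : A ⊗[k] C →ₗ[k] C ⊗[k] A := (TensorProduct.comm k A C).toLinearMap

/-- `g₀ : A ⊗ C → A`, `a ⊗ c ↦ ε_C(c) a`. -/
def g0 : A ⊗[k] C →ₗ[k] A :=
  (TensorProduct.rid k A).toLinearMap ∘ₗ lTensor A counit

/-- `ρ₀ : A ⊗ C → A ⊗ A`, `a ⊗ c ↦ ε_C(c) Δ_A(a)`. -/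
def ρ0 : A ⊗[k] C →ₗ[k] A ⊗[k] A := comul ∘ₗ g0 k A C

variable {A C}

/-- The property that a comultiplication `Δ` on `Y` is a morphism of algebras, where the
multiplication on `Y` is `m` and the one on `Y ⊗ Y` is componentwise (with the middle flip). -/
def DeltaIsMulMap {Y : Type u} [AddCommGroup Y] [Module k Y]
    (m : Y ⊗[k] Y →ₗ[k] Y) (Δ : Y →ₗ[k] Y ⊗[k] Y) : Prop :=
  Δ ∘ₗ m = TensorProduct.map m m ∘ₗ (tensorTensorTensorComm k Y Y Y Y).toLinearMap
    ∘ₗ TensorProduct.map Δ Δ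

/-- The property that a counit `ε` on `Y` is a morphism of algebras. -/
def EpsIsMulMap {Y : Type u} [AddCommGroup Y] [Module k Y]
    (m : Y ⊗[k] Y →ₗ[k] Y) (ε : Y →ₗ[k] k) : Prop :=
  ε ∘ₗ m = mul' k k ∘ₗ TensorProduct.map ε ε

/-- `A_{W₀}^{ρ₀} ⋈_R^σ C` is a cross product bialgebra: the crossed product algebra
`A ⊗_{R,σ} C` together with the tensor product coalgebra structure on `A ⊗ C`
form a bialgebra. -/
structure IsCrossBialgebra0 (eC : C) (R : C ⊗[k] A →ₗ[k] A ⊗[k] C)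
    (σ : C ⊗[k] C →ₗ[k] A ⊗[k] C) : Prop where
  brz : IsBrzezinski k eC R σ
  delta_mul : DeltaIsMulMap k (brzMul k R σ) (Coalgebra.comul (R := k) (A := A ⊗[k] C))
  delta_one : Coalgebra.comul (R := k) (A := A ⊗[k] C) ((1 : A) ⊗ₜ eC)
      = ((1 : A) ⊗ₜ eC) ⊗ₜ[k] ((1 : A) ⊗ₜ eC)
  eps_mul : EpsIsMulMap k (brzMul k R σ) (Coalgebra.counit (R := k) (A := A ⊗[k] C))
  eps_one : Coalgebra.counit (R := k) (A := A ⊗[k] C) ((1 : A) ⊗ₜ eC) = 1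

/-- `A_{W}^{ρ} ⋈_R^σ C` is a cross product bialgebra: the crossed product algebra
`A ⊗_{R,σ} C` together with the crossed coproduct coalgebra `A_{W,ρ} ⊗ C`
form a bialgebra. -/
structure IsCrossBialgebra (eC : C) (R : C ⊗[k] A →ₗ[k] A ⊗[k] C)
    (σ : C ⊗[k] C →ₗ[k] A ⊗[k] C) (W : A ⊗[k] C →ₗ[k] C ⊗[k] A)
    (ρ : A ⊗[k] C →ₗ[k] A ⊗[k] A) : Prop where
  brz : IsBrzezinski k eC R σ
  cobrz : IsCoBrzezinski k (Coalgebra.counit (R := k) (A := A)) W ρ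
  delta_mul : DeltaIsMulMap k (brzMul k R σ) (coDelta k W ρ)
  delta_one : coDelta k W ρ ((1 : A) ⊗ₜ eC) = ((1 : A) ⊗ₜ eC) ⊗ₜ[k] ((1 : A) ⊗ₜ eC)
  eps_mul : EpsIsMulMap k (brzMul k R σ) (coEps k (Coalgebra.counit (R := k) (A := A)))
  eps_one : coEps k (Coalgebra.counit (R := k) (A := A)) ((1 : A) ⊗ₜ eC) = 1

/-- The right `C`-coaction `a ⊗ c ↦ (a ⊗ c₁) ⊗ c₂` on `A ⊗ C`. -/
def coactC : A ⊗[k] C →ₗ[k] (A ⊗[k] C) ⊗[k] C :=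
  (TensorProduct.assoc k A C C).symm.toLinearMap ∘ₗ lTensor A comul

/-- The counit condition (extra1) for a map `θ : C → A ⊗ C`. -/
def CounitCond (θ : C →ₗ[k] A ⊗[k] C) : Prop :=
  (TensorProduct.lid k k).toLinearMap
      ∘ₗ TensorProduct.map (Coalgebra.counit (R := k) (A := A)) counit ∘ₗ θ
    = (counit : C →ₗ[k] k)

/-- The right `C`-comodule condition (extra2)/(extra3) for a map `θ : C → A ⊗ C`. -/
def ComodCond (θ : C →ₗ[k] A ⊗[k] C) : Prop :=
  lTensor A comul ∘ₗ θ
    = (TensorProduct.assoc k A C C).toLinearMap ∘ₗ rTensor C θ ∘ₗ comul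

/-- The map `c ↦ ε_A(c_{<-1>}) c_{<0>}`. -/
def epsFirst (θ : C →ₗ[k] A ⊗[k] C) : C →ₗ[k] C :=
  (TensorProduct.lid k C).toLinearMap
    ∘ₗ rTensor C (Coalgebra.counit (R := k) (A := A)) ∘ₗ θ

/-- The map `W'` built from `(θ, γ)`; `h` is applied to the first output factor
(`h = id` for formula (Wprimnou), `h = epsFirst γ` for formula (Wprim)). -/
def Wtw (θ γ : C →ₗ[k] A ⊗[k] C) (h : C →ₗ[k] C) : A ⊗[k] C →ₗ[k] C ⊗[k] A :=
  lTensor C (mul' k A) ∘ₗ (TensorProduct.assoc k C A A).toLinearMap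
    ∘ₗ rTensor A (TensorProduct.comm k A C).toLinearMap
    ∘ₗ (TensorProduct.assoc k A C A).symm.toLinearMap
    ∘ₗ rTensor (C ⊗[k] A) (mul' k A)
    ∘ₗ (TensorProduct.assoc k A A (C ⊗[k] A)).symm.toLinearMap
    ∘ₗ lTensor A (lTensor A (TensorProduct.map h (g0 k A C ∘ₗ γ) ∘ₗ comul) ∘ₗ θ)

/-- Componentwise multiplication `(A ⊗ A) ⊗ (A ⊗ A) → A ⊗ A` (with the middle flip). -/
def mulPair : (A ⊗[k] A) ⊗[k] (A ⊗[k] A) →ₗ[k] A ⊗[k] A :=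
  TensorProduct.map (mul' k A) (mul' k A) ∘ₗ (tensorTensorTensorComm k A A A A).toLinearMap

/-- The map `c ↦ c_{{-1}} ⊗ ε_C(c_{{0}}_{{0}}) c_{{0}}_{{-1}}`. -/
def lamAux (γ : C →ₗ[k] A ⊗[k] C) : C →ₗ[k] A ⊗[k] A :=
  lTensor A (g0 k A C ∘ₗ γ) ∘ₗ γ

/-- The map `κ` appearing in the formula (rhoprim). -/
def kapAux (θ γ : C →ₗ[k] A ⊗[k] C) : C →ₗ[k] A ⊗[k] A :=
  mulPair k ∘ₗ TensorProduct.map comul (lamAux k γ) ∘ₗ θ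

/-- The map `ρ'` of formula (rhoprim). -/
def ρtw (θ γ : C →ₗ[k] A ⊗[k] C) : A ⊗[k] C →ₗ[k] A ⊗[k] A :=
  mulPair k ∘ₗ TensorProduct.map comul (kapAux k θ γ)

/-- Auxiliary map for the explicit formula (deltaprim). -/
def eAux (θ γ : C →ₗ[k] A ⊗[k] C) : C →ₗ[k] (A ⊗[k] C) ⊗[k] A :=
  (TensorProduct.assoc k A C A).symm.toLinearMap
    ∘ₗ lTensor A (TensorProduct.comm k A C).toLinearMap
    ∘ₗ TensorProduct.map (mul' k A) LinearMap.id
    ∘ₗ (tensorTensorTensorComm k A A A C).toLinearMap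
    ∘ₗ TensorProduct.map comul γ ∘ₗ θ

/-- Auxiliary map for the explicit formula (deltaprim). -/
def dAux (θ γ : C →ₗ[k] A ⊗[k] C) : C →ₗ[k] (A ⊗[k] C) ⊗[k] (A ⊗[k] C) :=
  lTensor (A ⊗[k] C) (muls2 k A C)
    ∘ₗ (TensorProduct.assoc k (A ⊗[k] C) A (A ⊗[k] C)).toLinearMap
    ∘ₗ TensorProduct.map (eAux k θ γ) γ ∘ₗ comul

/-- The explicit formula (deltaprim) for the comultiplication `Δ'`. -/
def deltaExplicit (θ γ : C →ₗ[k] A ⊗[k] C) :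
    A ⊗[k] C →ₗ[k] (A ⊗[k] C) ⊗[k] (A ⊗[k] C) :=
  TensorProduct.map (muls2 k A C) (muls2 k A C)
    ∘ₗ (tensorTensorTensorComm k A A (A ⊗[k] C) (A ⊗[k] C)).toLinearMap
    ∘ₗ TensorProduct.map comul (dAux k θ γ)

/-- The conditions (cros1)--(cros4) and (extra1)--(extra3) on `(θ, γ)`. -/
def TwistConditions (eC : C) (R : C ⊗[k] A →ₗ[k] A ⊗[k] C)
    (σ : C ⊗[k] C →ₗ[k] A ⊗[k] C) (θ γ : C →ₗ[k] A ⊗[k] C) : Prop :=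
  Cros123 k eC θ γ ∧ Cros4 k R σ γ (σtw k R σ θ γ) ∧
  CounitCond k θ ∧ CounitCond k γ ∧ ComodCond k θ ∧ ComodCond k γ

/-- Equivalence of cross product bialgebras: a linear isomorphism which is a morphism of
bialgebras, of left `A`-modules and of right `C`-comodules; the target is the cross product
bialgebra `A_{W₀}^{ρ₀} ⋈_R^σ C` (with tensor product coalgebra structure), the source is
`A_{W'}^{ρ'} ⋈_{R'}^{σ'} C`. -/
def CrossEquiv (eC : C) (R : C ⊗[k] A →ₗ[k] A ⊗[k] C) (σ : C ⊗[k] C →ₗ[k] A ⊗[k] C)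
    (R' : C ⊗[k] A →ₗ[k] A ⊗[k] C) (σ' : C ⊗[k] C →ₗ[k] A ⊗[k] C)
    (W' : A ⊗[k] C →ₗ[k] C ⊗[k] A) (ρ' : A ⊗[k] C →ₗ[k] A ⊗[k] A) : Prop :=
  ∃ φ : (A ⊗[k] C) ≃ₗ[k] A ⊗[k] C,
    (∀ x y : A ⊗[k] C, φ (brzMul k R' σ' (x ⊗ₜ y)) = brzMul k R σ (φ x ⊗ₜ φ y)) ∧
    φ ((1 : A) ⊗ₜ eC) = (1 : A) ⊗ₜ eC ∧
    TensorProduct.map φ.toLinearMap φ.toLinearMap ∘ₗ coDelta k W' ρ'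
      = Coalgebra.comul (R := k) (A := A ⊗[k] C) ∘ₗ φ.toLinearMap ∧
    Coalgebra.counit (R := k) (A := A ⊗[k] C) ∘ₗ φ.toLinearMap
      = coEps k (Coalgebra.counit (R := k) (A := A)) ∧
    (∀ (a : A) (x : A ⊗[k] C), φ (muls2 k A C (a ⊗ₜ x)) = muls2 k A C (a ⊗ₜ φ x)) ∧
    rTensor C φ.toLinearMap ∘ₗ coactC k = coactC k ∘ₗ φ.toLinearMap

end BialgebraSide


section Drinfeld

variable (H : Type u) [Ring H] [HopfAlgebra k H]

/-- Convolution product on `H* = Dual k H`: `(p * q)(h) = p(h₁) q(h₂)`. -/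
def conv : Module.Dual k H ⊗[k] Module.Dual k H →ₗ[k] Module.Dual k H :=
  (Coalgebra.comul (R := k) (A := H)).dualMap ∘ₗ TensorProduct.dualDistrib k H H

/-- The left regular action `h ⊗ p ↦ h ⇀ p`, `(h ⇀ p)(h') = p(h'h)`. -/
def lact : H ⊗[k] Module.Dual k H →ₗ[k] Module.Dual k H :=
  TensorProduct.lift ((lcomp k (Module.Dual k H) ((LinearMap.mul k H).flip)
    ∘ₗ llcomp k H H k).flip)

/-- The right regular action `p ⊗ h ↦ p ↼ h`, `(p ↼ h)(h') = p(hh')`. -/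
def ract : Module.Dual k H ⊗[k] H →ₗ[k] Module.Dual k H :=
  TensorProduct.lift (lcomp k (Module.Dual k H) (LinearMap.mul k H)
    ∘ₗ llcomp k H H k)

/-- The map `h ⊗ p ↦ (h₁ ⇀ p ↼ S⁻¹(h₃)) ⊗ h₂`, where `Sinv` plays the role of `S⁻¹`. -/
def dPhi (Sinv : H →ₗ[k] H) :
    H ⊗[k] Module.Dual k H →ₗ[k] Module.Dual k H ⊗[k] H :=
  rTensor H (lact k H)
    ∘ₗ (TensorProduct.assoc k H (Module.Dual k H) H).symm.toLinearMap
    ∘ₗ lTensor H (TensorProduct.comm k H (Module.Dual k H)).toLinearMap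
    ∘ₗ lTensor H (lTensor H (ract k H
        ∘ₗ (TensorProduct.comm k H (Module.Dual k H)).toLinearMap
        ∘ₗ rTensor (Module.Dual k H) Sinv))
    ∘ₗ lTensor H (TensorProduct.assoc k H H (Module.Dual k H)).toLinearMap
    ∘ₗ (TensorProduct.assoc k H (H ⊗[k] H) (Module.Dual k H)).toLinearMap
    ∘ₗ rTensor (Module.Dual k H) (lTensor H comul ∘ₗ comul)

/-- The multiplication of the Drinfeld double:
`(p ⊗ h)(p' ⊗ h') = p (h₁ ⇀ p' ↼ S⁻¹(h₃)) ⊗ h₂ h'`. -/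
def dMul (Sinv : H →ₗ[k] H) :
    (Module.Dual k H ⊗[k] H) ⊗[k] (Module.Dual k H ⊗[k] H) →ₗ[k]
      Module.Dual k H ⊗[k] H :=
  rTensor H (conv k H)
    ∘ₗ (TensorProduct.assoc k (Module.Dual k H) (Module.Dual k H) H).symm.toLinearMap
    ∘ₗ lTensor (Module.Dual k H)
        (lTensor (Module.Dual k H) (mul' k H)
          ∘ₗ (TensorProduct.assoc k (Module.Dual k H) H H).toLinearMap
          ∘ₗ rTensor H (dPhi k H Sinv)
          ∘ₗ (TensorProduct.assoc k H (Module.Dual k H) H).symm.toLinearMap)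
    ∘ₗ (TensorProduct.assoc k (Module.Dual k H) H
          (Module.Dual k H ⊗[k] H)).toLinearMap

/-- The comultiplication of `H*`, dual to the multiplication of `H` (finite dimensional). -/
def comulD [FiniteDimensional k H] :
    Module.Dual k H →ₗ[k] Module.Dual k H ⊗[k] Module.Dual k H :=
  (TensorProduct.dualDistribEquiv k H H).symm.toLinearMap ∘ₗ (mul' k H).dualMap

/-- The comultiplication of `H^{*cop}`. -/
def comulDcop [FiniteDimensional k H] :
    Module.Dual k H →ₗ[k] Module.Dual k H ⊗[k] Module.Dual k H :=
  (TensorProduct.comm k (Module.Dual k H) (Module.Dual k H)).toLinearMap ∘ₗ comulD k H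

/-- The counit of `H*`: evaluation at `1`. -/
def counitD : Module.Dual k H →ₗ[k] k := Module.Dual.eval k H 1

/-- The comultiplication of the tensor product coalgebra `H^{*cop} ⊗ H`. -/
def deltaD [FiniteDimensional k H] :
    Module.Dual k H ⊗[k] H →ₗ[k]
      (Module.Dual k H ⊗[k] H) ⊗[k] (Module.Dual k H ⊗[k] H) :=
  (tensorTensorTensorComm k (Module.Dual k H) (Module.Dual k H) H H).toLinearMap
    ∘ₗ TensorProduct.map (comulDcop k H) comul

/-- The counit of the tensor product coalgebra `H^{*cop} ⊗ H`. -/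
def epsD : Module.Dual k H ⊗[k] H →ₗ[k] k :=
  (TensorProduct.lid k k).toLinearMap
    ∘ₗ TensorProduct.map (counitD k H) (Coalgebra.counit (R := k) (A := H))

/-- The left `H^{*cop}`-coaction on `H^{*cop} ⊗ H`: `p ⊗ h ↦ p₂ ⊗ (p₁ ⊗ h)`. -/
def coactD [FiniteDimensional k H] :
    Module.Dual k H ⊗[k] H →ₗ[k]
      Module.Dual k H ⊗[k] (Module.Dual k H ⊗[k] H) :=
  (TensorProduct.assoc k (Module.Dual k H) (Module.Dual k H) H).toLinearMap
    ∘ₗ rTensor H (comulDcop k H)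

/-- `r₁₂ ∈ H ⊗ (H ⊗ H)` for `r ∈ H ⊗ H`. -/
def r12 (r : H ⊗[k] H) : H ⊗[k] (H ⊗[k] H) :=
  lTensor H ((TensorProduct.mk k H H).flip 1) r

/-- `r₁₃ ∈ H ⊗ (H ⊗ H)` for `r ∈ H ⊗ H`. -/
def r13 (r : H ⊗[k] H) : H ⊗[k] (H ⊗[k] H) :=
  lTensor H (TensorProduct.mk k H H 1) r

/-- `r₂₃ ∈ H ⊗ (H ⊗ H)` for `r ∈ H ⊗ H`. -/
def r23 (r : H ⊗[k] H) : H ⊗[k] (H ⊗[k] H) := (1 : H) ⊗ₜ r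

/-- `r` is a quasitriangular structure on `H`. -/
structure IsQuasitriangular (r : H ⊗[k] H) : Prop where
  qt1 : (TensorProduct.assoc k H H H) (rTensor H comul r) = r13 k H r * r23 k H r
  qt2 : lTensor H comul r = r13 k H r * r12 k H r
  qt3 : ∀ h : H, (TensorProduct.comm k H H) (comul h) * r = r * comul h
  qt4l : (TensorProduct.lid k H)
      (rTensor H (Coalgebra.counit (R := k) (A := H)) r) = 1
  qt4r : (TensorProduct.rid k H)
      (lTensor H (Coalgebra.counit (R := k) (A := H)) r) = 1

/-- Majid's map `φ(p ⊗ h) = (p ↼ S⁻¹(r¹)) ⊗ r² h`. -/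
def phiMajid (r : H ⊗[k] H) (Sinv : H →ₗ[k] H) :
    Module.Dual k H ⊗[k] H →ₗ[k] Module.Dual k H ⊗[k] H :=
  TensorProduct.map (ract k H ∘ₗ lTensor (Module.Dual k H) Sinv)
      (mul' k H ∘ₗ (TensorProduct.comm k H H).toLinearMap)
    ∘ₗ (tensorTensorTensorComm k (Module.Dual k H) H H H).toLinearMap
    ∘ₗ (TensorProduct.mk k (Module.Dual k H ⊗[k] H) (H ⊗[k] H)).flip r

end Drinfeld

end Paper

universe u
open Paper


section Statement18Aux

set_option synthInstance.maxHeartbeats 1000000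
set_option maxHeartbeats 1000000

namespace Statement18Aux

open TensorProduct LinearMap Coalgebra

variable {k H : Type u} [Field k] [Ring H] [HopfAlgebra k H]

local notation "𝒮" => HopfAlgebra.antipode (R := k) (A := H)

/-! ### Convolution algebra -/

variable (k H) in
/-- Convolution product on `Hom(C, H)`. -/
def cv {C : Type u} [AddCommGroup C] [Module k C] [Coalgebra k C]
    (f g : C →ₗ[k] H) : C →ₗ[k] H :=
  mul' k H ∘ₗ TensorProduct.map f g ∘ₗ Coalgebra.comul

variable (k H) in
/-- Convolution unit on `Hom(C, H)`. -/
def cu {C : Type u} [AddCommGroup C] [Module k C] [Coalgebra k C] : C →ₗ[k] H :=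
  Algebra.linearMap k H ∘ₗ Coalgebra.counit

lemma mul_assoc_map :
    mul' k H ∘ₗ TensorProduct.map (mul' k H) LinearMap.id
      = mul' k H ∘ₗ TensorProduct.map LinearMap.id (mul' k H)
          ∘ₗ (TensorProduct.assoc k H H H).toLinearMap := by
  apply TensorProduct.ext_threefold
  intro a b c
  simp [mul_assoc]

lemma cv_assoc {C : Type u} [AddCommGroup C] [Module k C] [Coalgebra k C]
    (f g h : C →ₗ[k] H) : cv k H (cv k H f g) h = cv k H f (cv k H g h) := by
  have e1 : TensorProduct.map (mul' k H ∘ₗ TensorProduct.map f g ∘ₗ Coalgebra.comul) h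
      = TensorProduct.map (mul' k H) LinearMap.id
        ∘ₗ TensorProduct.map (TensorProduct.map f g) h
        ∘ₗ TensorProduct.map (Coalgebra.comul (R := k)) LinearMap.id := by
    rw [← TensorProduct.map_comp, ← TensorProduct.map_comp]
    simp
  have e2 : TensorProduct.map f (mul' k H ∘ₗ TensorProduct.map g h ∘ₗ Coalgebra.comul)
      = TensorProduct.map LinearMap.id (mul' k H)
        ∘ₗ TensorProduct.map f (TensorProduct.map g h)
        ∘ₗ TensorProduct.map LinearMap.id (Coalgebra.comul (R := k)) := by
    rw [← TensorProduct.map_comp, ← TensorProduct.map_comp]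
    simp
  apply LinearMap.ext; intro x
  simp only [cv, LinearMap.comp_apply, e1, e2]
  have hc : TensorProduct.map LinearMap.id (Coalgebra.comul (R := k))
        (Coalgebra.comul (R := k) x)
      = TensorProduct.assoc k C C C
          (TensorProduct.map (Coalgebra.comul (R := k)) LinearMap.id
            (Coalgebra.comul (R := k) x)) := by
    have h0 := Coalgebra.coassoc_apply (R := k) (A := C) x
    simpa [LinearMap.rTensor, LinearMap.lTensor] using h0.symm
  rw [hc, TensorProduct.map_map_assoc]
  have h1 := LinearMap.congr_fun (mul_assoc_map (k := k) (H := H))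
    (TensorProduct.map (TensorProduct.map f g) h
      (TensorProduct.map (Coalgebra.comul (R := k)) LinearMap.id
        (Coalgebra.comul (R := k) x)))
  simpa using h1

lemma cv_cu_right {C : Type u} [AddCommGroup C] [Module k C] [Coalgebra k C]
    (f : C →ₗ[k] H) : cv k H f (cu k H) = f := by
  have e1 : TensorProduct.map f (cu k H (C := C))
      = TensorProduct.map f (Algebra.linearMap k H)
        ∘ₗ TensorProduct.map LinearMap.id (Coalgebra.counit (R := k)) := by
    rw [← TensorProduct.map_comp]
    simp [cu]
  apply LinearMap.ext; intro x
  simp only [cv, LinearMap.comp_apply, e1]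
  have h2 : TensorProduct.map LinearMap.id (Coalgebra.counit (R := k))
      (Coalgebra.comul (R := k) x) = x ⊗ₜ (1 : k) := by
    simpa [LinearMap.lTensor] using Coalgebra.lTensor_counit_comul (R := k) x
  rw [h2]
  simp

lemma cv_cu_left {C : Type u} [AddCommGroup C] [Module k C] [Coalgebra k C]
    (f : C →ₗ[k] H) : cv k H (cu k H) f = f := by
  have e1 : TensorProduct.map (cu k H (C := C)) f
      = TensorProduct.map (Algebra.linearMap k H) f
        ∘ₗ TensorProduct.map (Coalgebra.counit (R := k)) LinearMap.id := by
    rw [← TensorProduct.map_comp]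
    simp [cu]
  apply LinearMap.ext; intro x
  simp only [cv, LinearMap.comp_apply, e1]
  have h2 : TensorProduct.map (Coalgebra.counit (R := k)) LinearMap.id
      (Coalgebra.comul (R := k) x) = (1 : k) ⊗ₜ x := by
    simpa [LinearMap.rTensor] using Coalgebra.rTensor_counit_comul (R := k) x
  rw [h2]
  simp

/-! ### The antipode is an anti-homomorphism -/

variable (k H) in
/-- `a ⊗ b ↦ S(b) S(a)`. -/
def GG : H ⊗[k] H →ₗ[k] H :=
  mul' k H ∘ₗ TensorProduct.map 𝒮 𝒮 ∘ₗ (TensorProduct.comm k H H).toLinearMap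

lemma map_mul_mul_ttt (u v : H ⊗[k] H) :
    TensorProduct.map (mul' k H) (mul' k H)
        (tensorTensorTensorComm k H H H H (u ⊗ₜ v)) = u * v := by
  induction u using TensorProduct.induction_on with
  | zero => simp
  | tmul a b =>
    induction v using TensorProduct.induction_on with
    | zero => simp
    | tmul c d => simp [Algebra.TensorProduct.tmul_mul_tmul]
    | add v1 v2 h1 h2 => simp only [tmul_add, map_add, mul_add, h1, h2]
  | add u1 u2 h1 h2 => simp only [add_tmul, map_add, add_mul, h1, h2]

lemma comul_tmul_eq (a b : H) :
    Coalgebra.comul (R := k) (A := H ⊗[k] H) (a ⊗ₜ b)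
      = tensorTensorTensorComm k H H H H
          (Coalgebra.comul (R := k) a ⊗ₜ Coalgebra.comul (R := k) b) := by
  rw [TensorProduct.comul_tmul]; rfl

lemma cu_tmul_eq (a b : H) :
    cu k H (C := H ⊗[k] H) (a ⊗ₜ b)
      = algebraMap k H (Coalgebra.counit (R := k) a * Coalgebra.counit (R := k) b) := by
  simp [cu]
  exact Algebra.commutes _ _

lemma cv_mul_G : cv k H (mul' k H) (GG k H) = cu k H := by
  apply TensorProduct.ext'
  intro a b
  have hA : ∀ (x1 x2 : H) (v : H ⊗[k] H),
      mul' k H (TensorProduct.map (mul' k H) (GG k H)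
        (tensorTensorTensorComm k H H H H ((x1 ⊗ₜ x2) ⊗ₜ v)))
      = x1 * mul' k H ((𝒮).lTensor H v) * 𝒮 x2 := by
    intro x1 x2 v
    induction v using TensorProduct.induction_on with
    | zero => simp
    | tmul y1 y2 => simp [GG, mul_assoc]
    | add v1 v2 h1 h2 => simp only [tmul_add, map_add, mul_add, add_mul, h1, h2]
  have hB : ∀ u : H ⊗[k] H,
      mul' k H (TensorProduct.map (mul' k H) (GG k H)
        (tensorTensorTensorComm k H H H H (u ⊗ₜ Coalgebra.comul (R := k) b)))
      = Coalgebra.counit (R := k) b • mul' k H ((𝒮).lTensor H u) := by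
    intro u
    induction u using TensorProduct.induction_on with
    | zero => simp
    | tmul x1 x2 =>
      rw [hA, HopfAlgebra.mul_antipode_lTensor_comul_apply,
        Algebra.algebraMap_eq_smul_one]
      simp [mul_smul_comm, smul_mul_assoc]
    | add u1 u2 h1 h2 => simp only [add_tmul, map_add, smul_add, h1, h2]
  simp only [cv, LinearMap.comp_apply, comul_tmul_eq]
  rw [hB, HopfAlgebra.mul_antipode_lTensor_comul_apply, cu_tmul_eq]
  rw [Algebra.algebraMap_eq_smul_one, Algebra.algebraMap_eq_smul_one, smul_smul,
    mul_comm]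

lemma cv_F_mul : cv k H (𝒮 ∘ₗ mul' k H) (mul' k H) = cu k H := by
  apply TensorProduct.ext'
  intro a b
  have hsplit : TensorProduct.map (𝒮 ∘ₗ mul' k H) (mul' k H)
      = TensorProduct.map 𝒮 LinearMap.id
        ∘ₗ TensorProduct.map (mul' k H) (mul' k H) := by
    rw [← TensorProduct.map_comp]; simp
  simp only [cv, LinearMap.comp_apply, comul_tmul_eq, hsplit]
  rw [map_mul_mul_ttt, ← Bialgebra.comul_mul]
  have hre : TensorProduct.map 𝒮 LinearMap.id
      (Coalgebra.comul (R := k) (a * b)) = (𝒮).rTensor H (Coalgebra.comul (R := k) (a * b)) := rfl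
  rw [hre, HopfAlgebra.mul_antipode_rTensor_comul_apply, cu_tmul_eq,
    Bialgebra.counit_mul]

lemma antipode_mul (a b : H) : 𝒮 (a * b) = 𝒮 b * 𝒮 a := by
  have hFG : (𝒮 ∘ₗ mul' k H : H ⊗[k] H →ₗ[k] H) = GG k H := by
    calc (𝒮 ∘ₗ mul' k H : H ⊗[k] H →ₗ[k] H)
        = cv k H (𝒮 ∘ₗ mul' k H) (cu k H) := (cv_cu_right _).symm
      _ = cv k H (𝒮 ∘ₗ mul' k H) (cv k H (mul' k H) (GG k H)) := by rw [cv_mul_G]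
      _ = cv k H (cv k H (𝒮 ∘ₗ mul' k H) (mul' k H)) (GG k H) := (cv_assoc _ _ _).symm
      _ = cv k H (cu k H) (GG k H) := by rw [cv_F_mul]
      _ = GG k H := cv_cu_left _
  have h := LinearMap.congr_fun hFG (a ⊗ₜ b)
  simpa [GG] using h

lemma antipode_one : 𝒮 (1 : H) = 1 := by
  have h := HopfAlgebra.mul_antipode_rTensor_comul_apply (R := k) (a := (1 : H))
  have hc : Coalgebra.comul (R := k) (1 : H) = (1 : H) ⊗ₜ (1 : H) := by
    simpa [Algebra.TensorProduct.one_def] using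
      map_one (Bialgebra.comulAlgHom k H)
  rw [hc] at h
  simpa using h

lemma counit_antipode (a : H) :
    Coalgebra.counit (R := k) (𝒮 a) = Coalgebra.counit (R := k) a := by
  have key : ∀ u : H ⊗[k] H,
      Coalgebra.counit (R := k) (mul' k H ((𝒮).rTensor H u))
        = Coalgebra.counit (R := k)
            (𝒮 ((TensorProduct.rid k H) ((Coalgebra.counit (R := k)).lTensor H u))) := by
    intro u
    induction u using TensorProduct.induction_on with
    | zero => simp
    | tmul x y => simp [Bialgebra.counit_mul, mul_comm]
    | add u1 u2 h1 h2 => simp only [map_add, h1, h2]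
  have h := key (Coalgebra.comul (R := k) a)
  rw [HopfAlgebra.mul_antipode_rTensor_comul_apply, Coalgebra.lTensor_counit_comul] at h
  simpa using h.symm

variable {Sinv : H →ₗ[k] H}

lemma sinv_of (hS1 : Sinv ∘ₗ 𝒮 = LinearMap.id) (x : H) : Sinv (𝒮 x) = x := by
  simpa using LinearMap.congr_fun hS1 x

lemma of_sinv (hS2 : 𝒮 ∘ₗ Sinv = LinearMap.id) (x : H) : 𝒮 (Sinv x) = x := by
  simpa using LinearMap.congr_fun hS2 x

lemma sinv_one (hS1 : Sinv ∘ₗ 𝒮 = LinearMap.id) : Sinv (1 : H) = 1 := by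
  have h := sinv_of hS1 1
  rwa [antipode_one] at h

lemma sinv_mul (hS1 : Sinv ∘ₗ 𝒮 = LinearMap.id) (hS2 : 𝒮 ∘ₗ Sinv = LinearMap.id)
    (a b : H) : Sinv (a * b) = Sinv b * Sinv a := by
  conv_lhs => rw [← of_sinv hS2 a, ← of_sinv hS2 b, ← antipode_mul]
  exact sinv_of hS1 _

lemma counit_sinv (hS2 : 𝒮 ∘ₗ Sinv = LinearMap.id) (a : H) :
    Coalgebra.counit (R := k) (Sinv a) = Coalgebra.counit (R := k) a := by
  have h := counit_antipode (k := k) (Sinv a)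
  rw [of_sinv hS2] at h
  exact h.symm

/-! ### Basic `ract` and `phiMajid` lemmas -/

lemma ract_apply (p : Module.Dual k H) (a h' : H) :
    Paper.ract k H (p ⊗ₜ a) h' = p (a * h') := by
  simp [Paper.ract]

lemma ract_one (p : Module.Dual k H) : Paper.ract k H (p ⊗ₜ (1 : H)) = p := by
  ext h'; simp [ract_apply]

lemma ract_ract (p : Module.Dual k H) (u v : H) :
    Paper.ract k H (Paper.ract k H (p ⊗ₜ u) ⊗ₜ v) = Paper.ract k H (p ⊗ₜ (u * v)) := by
  ext h'; simp [ract_apply, mul_assoc]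

lemma phiMajid_tmul (a b : H) (Sinv : H →ₗ[k] H) (p : Module.Dual k H) (h : H) :
    Paper.phiMajid k H (a ⊗ₜ b) Sinv (p ⊗ₜ h)
      = Paper.ract k H (p ⊗ₜ Sinv a) ⊗ₜ (b * h) := by
  simp [Paper.phiMajid]

lemma phiMajid_zero (Sinv : H →ₗ[k] H) (z : Module.Dual k H ⊗[k] H) :
    Paper.phiMajid k H 0 Sinv z = 0 := by
  simp [Paper.phiMajid]

lemma phiMajid_zero_map (Sinv : H →ₗ[k] H) :
    Paper.phiMajid k H 0 Sinv = 0 :=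
  LinearMap.ext fun z => phiMajid_zero Sinv z

lemma phiMajid_add (x y : H ⊗[k] H) (Sinv : H →ₗ[k] H) (z : Module.Dual k H ⊗[k] H) :
    Paper.phiMajid k H (x + y) Sinv z
      = Paper.phiMajid k H x Sinv z + Paper.phiMajid k H y Sinv z := by
  simp [Paper.phiMajid, tmul_add]

lemma phiMajid_add_map (x y : H ⊗[k] H) (Sinv : H →ₗ[k] H) :
    Paper.phiMajid k H (x + y) Sinv
      = Paper.phiMajid k H x Sinv + Paper.phiMajid k H y Sinv :=
  LinearMap.ext fun z => phiMajid_add x y Sinv z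

lemma phiMajid_mul_apply (hS1 : Sinv ∘ₗ 𝒮 = LinearMap.id) (hS2 : 𝒮 ∘ₗ Sinv = LinearMap.id)
    (x y : H ⊗[k] H) (z : Module.Dual k H ⊗[k] H) :
    Paper.phiMajid k H x Sinv (Paper.phiMajid k H y Sinv z)
      = Paper.phiMajid k H (x * y) Sinv z := by
  induction z using TensorProduct.induction_on with
  | zero => simp
  | add z1 z2 h1 h2 => simp only [map_add, h1, h2]
  | tmul p h =>
    induction y using TensorProduct.induction_on with
    | zero => simp [phiMajid_zero]
    | add y1 y2 hy1 hy2 => rw [phiMajid_add, map_add, hy1, hy2, mul_add, phiMajid_add]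
    | tmul c d =>
      induction x using TensorProduct.induction_on with
      | zero => simp [phiMajid_zero]
      | add x1 x2 hx1 hx2 => rw [phiMajid_add, hx1, hx2, add_mul, phiMajid_add]
      | tmul a b =>
        rw [phiMajid_tmul, phiMajid_tmul, Algebra.TensorProduct.tmul_mul_tmul,
          phiMajid_tmul, ract_ract, ← sinv_mul hS1 hS2, mul_assoc b d h]

lemma phiMajid_one_apply (hS1 : Sinv ∘ₗ 𝒮 = LinearMap.id) (z : Module.Dual k H ⊗[k] H) :
    Paper.phiMajid k H 1 Sinv z = z := by
  induction z using TensorProduct.induction_on with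
  | zero => simp
  | add z1 z2 h1 h2 => rw [map_add, h1, h2]
  | tmul p h =>
    rw [Algebra.TensorProduct.one_def, phiMajid_tmul, sinv_one hS1, ract_one, one_mul]

/-! ### `(S ⊗ id)(r)` is a left inverse of `r` -/

variable (k H) in
/-- `a ⊗ (c ⊗ b) ↦ (S(a) c) ⊗ b`. -/
def Fmap : H ⊗[k] (H ⊗[k] H) →ₗ[k] H ⊗[k] H :=
  rTensor H (mul' k H ∘ₗ rTensor H 𝒮)
    ∘ₗ (TensorProduct.assoc k H H H).symm.toLinearMap

lemma Fmap_tmul (a c b' : H) :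
    Fmap k H (a ⊗ₜ (c ⊗ₜ b')) = (𝒮 a * c) ⊗ₜ b' := by
  simp [Fmap]

lemma Fmap_r13_r23 (x y : H ⊗[k] H) :
    Fmap k H (r13 k H x * r23 k H y) = rTensor H 𝒮 x * y := by
  simp only [Paper.r13, Paper.r23]
  induction x using TensorProduct.induction_on with
  | zero => simp
  | add x1 x2 h1 h2 => simp only [map_add, add_mul, h1, h2]
  | tmul a b =>
    induction y using TensorProduct.induction_on with
    | zero => simp
    | add y1 y2 h1 h2 => simp only [tmul_add, mul_add, map_add, h1, h2]
    | tmul c d =>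
      simp only [lTensor_tmul, TensorProduct.mk_apply, rTensor_tmul,
        Algebra.TensorProduct.tmul_mul_tmul, mul_one, one_mul, Fmap_tmul]

lemma Fmap_assoc_comul (x : H ⊗[k] H) :
    Fmap k H ((TensorProduct.assoc k H H H) ((Coalgebra.comul (R := k)).rTensor H x))
      = (1 : H) ⊗ₜ[k] (TensorProduct.lid k H) ((Coalgebra.counit (R := k)).rTensor H x) := by
  induction x using TensorProduct.induction_on with
  | zero => simp
  | add x1 x2 h1 h2 => simp only [map_add, h1, h2, tmul_add]
  | tmul a b =>
    have inner : ∀ u : H ⊗[k] H,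
        Fmap k H (TensorProduct.assoc k H H H (u ⊗ₜ b))
          = mul' k H ((𝒮).rTensor H u) ⊗ₜ b := by
      intro u
      induction u using TensorProduct.induction_on with
      | zero => simp
      | add u1 u2 h1 h2 => simp only [add_tmul, map_add, h1, h2]
      | tmul x y => simp [Fmap_tmul]
    rw [rTensor_tmul, inner (Coalgebra.comul (R := k) a),
      HopfAlgebra.mul_antipode_rTensor_comul_apply, rTensor_tmul]
    simp [Algebra.algebraMap_eq_smul_one, smul_tmul]

lemma antipode_r_mul (r : H ⊗[k] H) (hr : IsQuasitriangular k H r) :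
    rTensor H 𝒮 r * r = 1 := by
  calc rTensor H 𝒮 r * r = Fmap k H (r13 k H r * r23 k H r) := (Fmap_r13_r23 r r).symm
    _ = Fmap k H ((TensorProduct.assoc k H H H) ((Coalgebra.comul (R := k)).rTensor H r)) := by
        rw [hr.qt1]
    _ = (1 : H) ⊗ₜ[k] (TensorProduct.lid k H) ((Coalgebra.counit (R := k)).rTensor H r) :=
        Fmap_assoc_comul r
    _ = 1 := by rw [hr.qt4l, Algebra.TensorProduct.one_def]

/-! ### Comultiplication of the dual -/

variable (k H) in
/-- Right translation `q ↦ q ↼ c` on the dual. -/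
def rc (c : H) : Module.Dual k H →ₗ[k] Module.Dual k H :=
  Paper.ract k H ∘ₗ (TensorProduct.mk k (Module.Dual k H) H).flip c

lemma rc_apply (c : H) (q : Module.Dual k H) :
    rc k H c q = Paper.ract k H (q ⊗ₜ c) := rfl

lemma dualDistrib_comulD [FiniteDimensional k H] (p : Module.Dual k H) :
    TensorProduct.dualDistrib k H H (comulD k H p) = (mul' k H).dualMap p := by
  have h : (TensorProduct.dualDistribEquiv k H H) (comulD k H p)
      = (mul' k H).dualMap p := by
    simp only [Paper.comulD, LinearMap.comp_apply, LinearEquiv.coe_coe,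
      LinearEquiv.apply_symm_apply]
  exact h

lemma comulD_ract [FiniteDimensional k H] (p : Module.Dual k H) (c : H) :
    comulD k H (Paper.ract k H (p ⊗ₜ c))
      = rTensor (Module.Dual k H) (rc k H c) (comulD k H p) := by
  apply (TensorProduct.dualDistribEquiv k H H).injective
  have e1 : ∀ T : Module.Dual k H ⊗[k] Module.Dual k H,
      TensorProduct.dualDistrib k H H (rTensor (Module.Dual k H) (rc k H c) T)
        = TensorProduct.dualDistrib k H H T ∘ₗ rTensor H (mulLeft k c) := by
    intro T
    induction T using TensorProduct.induction_on with
    | zero => simp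
    | add T1 T2 h1 h2 => simp only [map_add, h1, h2, LinearMap.add_comp]
    | tmul f g =>
      apply TensorProduct.ext'
      intro x y
      simp [TensorProduct.dualDistrib_apply, rc_apply, ract_apply]
  have e_eq : ∀ T : Module.Dual k H ⊗[k] Module.Dual k H,
      (TensorProduct.dualDistribEquiv k H H) T = TensorProduct.dualDistrib k H H T :=
    fun _ => rfl
  rw [e_eq, e_eq, dualDistrib_comulD, e1, dualDistrib_comulD]
  apply TensorProduct.ext'
  intro x y
  simp [ract_apply, mul_assoc]

lemma comulDcop_ract [FiniteDimensional k H] (p : Module.Dual k H) (c : H) :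
    comulDcop k H (Paper.ract k H (p ⊗ₜ c))
      = lTensor (Module.Dual k H) (rc k H c) (comulDcop k H p) := by
  simp only [Paper.comulDcop, LinearMap.comp_apply, LinearEquiv.coe_coe]
  rw [comulD_ract]
  generalize comulD k H p = T
  induction T using TensorProduct.induction_on with
  | zero => simp
  | add T1 T2 h1 h2 => simp only [map_add, h1, h2]
  | tmul f g => simp

lemma coactD_tmul [FiniteDimensional k H] (q : Module.Dual k H) (g : H) :
    coactD k H (q ⊗ₜ g)
      = TensorProduct.assoc k (Module.Dual k H) (Module.Dual k H) H
          ((comulDcop k H q) ⊗ₜ g) := by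
  simp [Paper.coactD]

end Statement18Aux

end Statement18Aux

set_option synthInstance.maxHeartbeats 1000000
set_option maxHeartbeats 1000000

/-- for a finite dimensional quasitriangular Hopf algebra `H`, Majid's map
`φ(p ⊗ h) = (p ↼ S⁻¹(r¹)) ⊗ r² h` is bijective, fixes `ε ⊗ h`, is a morphism of right
`H`-modules and a morphism of left `H^{*cop}`-comodules. -/
theorem statement18 {k H : Type u} [Field k] [Ring H] [HopfAlgebra k H]
    [FiniteDimensional k H] (Sinv : H →ₗ[k] H)
    (hS1 : Sinv ∘ₗ HopfAlgebra.antipode (R := k) (A := H) = LinearMap.id)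
    (hS2 : HopfAlgebra.antipode (R := k) (A := H) ∘ₗ Sinv = LinearMap.id)
    (r : H ⊗[k] H) (hr : IsQuasitriangular k H r) :
    Function.Bijective (phiMajid k H r Sinv) ∧
    (∀ h : H, phiMajid k H r Sinv
        ((Coalgebra.counit (R := k) (A := H) : Module.Dual k H) ⊗ₜ[k] h)
      = (Coalgebra.counit (R := k) (A := H) : Module.Dual k H) ⊗ₜ[k] h) ∧
    (∀ h : H, phiMajid k H r Sinv ∘ₗ lTensor (Module.Dual k H) (mulRight k h)
      = lTensor (Module.Dual k H) (mulRight k h) ∘ₗ phiMajid k H r Sinv) ∧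
    coactD k H ∘ₗ phiMajid k H r Sinv
      = lTensor (Module.Dual k H) (phiMajid k H r Sinv) ∘ₗ coactD k H := by
  open Statement18Aux in
  refine ⟨?_, ?_, ?_, ?_⟩
  · -- bijectivity
    have hleft : Function.LeftInverse
        (phiMajid k H (rTensor H (HopfAlgebra.antipode (R := k) (A := H)) r) Sinv)
        (phiMajid k H r Sinv) := by
      intro z
      rw [phiMajid_mul_apply hS1 hS2, antipode_r_mul r hr, phiMajid_one_apply hS1]
    have hinj : Function.Injective (phiMajid k H r Sinv) := hleft.injective
    exact ⟨hinj, (@LinearMap.injective_iff_surjective k (Module.Dual k H ⊗[k] H) _ _ _ _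
      (phiMajid k H r Sinv)).mp hinj⟩
  · -- fixes ε ⊗ h
    intro h
    have key : ∀ x : H ⊗[k] H,
        phiMajid k H x Sinv
            ((Coalgebra.counit (R := k) (A := H) : Module.Dual k H) ⊗ₜ[k] h)
          = (Coalgebra.counit (R := k) (A := H) : Module.Dual k H)
              ⊗ₜ[k] ((TensorProduct.lid k H)
                ((Coalgebra.counit (R := k)).rTensor H x) * h) := by
      intro x
      induction x using TensorProduct.induction_on with
      | zero => simp [phiMajid_zero]
      | add x1 x2 h1 h2 => rw [phiMajid_add, h1, h2, map_add, map_add, add_mul, tmul_add]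
      | tmul a b =>
        rw [phiMajid_tmul]
        have hract : Paper.ract k H
            ((Coalgebra.counit (R := k) (A := H) : Module.Dual k H) ⊗ₜ Sinv a)
            = Coalgebra.counit (R := k) (Sinv a)
                • (Coalgebra.counit (R := k) (A := H) : Module.Dual k H) := by
          ext x'
          simp [ract_apply, Bialgebra.counit_mul]
        rw [hract, counit_sinv hS2]
        simp [TensorProduct.smul_tmul, smul_mul_assoc]
    rw [key r, hr.qt4l, one_mul]
  · -- right H-module morphism
    intro h
    apply TensorProduct.ext'
    intro p g
    simp only [LinearMap.comp_apply, lTensor_tmul, LinearMap.mulRight_apply]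
    have key : ∀ x : H ⊗[k] H,
        phiMajid k H x Sinv (p ⊗ₜ (g * h))
          = lTensor (Module.Dual k H) (mulRight k h) (phiMajid k H x Sinv (p ⊗ₜ g)) := by
      intro x
      induction x using TensorProduct.induction_on with
      | zero => simp [phiMajid_zero]
      | add x1 x2 h1 h2 => rw [phiMajid_add, phiMajid_add, h1, h2, map_add]
      | tmul a b =>
        rw [phiMajid_tmul, phiMajid_tmul, lTensor_tmul, LinearMap.mulRight_apply,
          mul_assoc]
    exact key r
  · -- left H^{*cop}-comodule morphism
    apply TensorProduct.ext'
    intro p h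
    simp only [LinearMap.comp_apply]
    have key : ∀ x : H ⊗[k] H,
        coactD k H (phiMajid k H x Sinv (p ⊗ₜ h))
          = lTensor (Module.Dual k H) (phiMajid k H x Sinv) (coactD k H (p ⊗ₜ h)) := by
      intro x
      induction x using TensorProduct.induction_on with
      | zero => simp [phiMajid_zero, phiMajid_zero_map]
      | add x1 x2 h1 h2 =>
        rw [phiMajid_add, map_add, h1, h2, phiMajid_add_map, lTensor_add,
          LinearMap.add_apply]
      | tmul a b =>
        rw [phiMajid_tmul, coactD_tmul, coactD_tmul, comulDcop_ract]
        generalize comulDcop k H p = T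
        induction T using TensorProduct.induction_on with
        | zero => simp
        | add T1 T2 h1 h2 => simp only [map_add, add_tmul, h1, h2]
        | tmul f g =>
          simp only [lTensor_tmul, TensorProduct.assoc_tmul, rc_apply, phiMajid_tmul]
    exact key r
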